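/- Let k be a commutative ring, A a k-algebra, N an (A,A)-bimodule, and Σ = (−) ⊗_A N the induced endofunctor on (A,A)-bimodules. Then Σ admits a connection σ : B̃Σ ⟶ ΣB̃ (equivalently a natural splitting ∇_M : M ⊗_A N ⟶ M ⊗_k N of the quotient maps M ⊗_k N ⟶ M ⊗_A N) if and only if N is k-relative projective as a left A-module, i.e., the action map A ⊗_k N ⟶ N admits a left A-linear splitting. -/

import Mathlib

open TensorProduct

universe u

namespace BohmStefan

variable (k : Type u) [CommRing k] (A : Type u) [Ring A] [Algebra k A]

/-- The `A`-submodule of `M ⊗[k] N` generated by the elements `ma ⊗ n - m ⊗ an`;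
the quotient by it is `M ⊗_A N`. -/
def relSub (M : Type u) [AddCommGroup M] [Module k M] [Module A M] [Module Aᵐᵒᵖ M]
    [IsScalarTower k A M]
    (N : Type u) [AddCommGroup N] [Module k N] [Module A N] :
    Submodule A (M ⊗[k] N) :=
  Submodule.span A {x : M ⊗[k] N | ∃ (a : A) (m : M) (n : N),
    x = (MulOpposite.op a • m) ⊗ₜ[k] n - m ⊗ₜ[k] (a • n)}

/-- The action map `A ⊗[k] N ⟶ N`, `a ⊗ n ↦ a • n`. -/
noncomputable def actionMap (N : Type u) [AddCommGroup N] [Module k N] [Module A N]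
    [IsScalarTower k A N] : A ⊗[k] N →ₗ[k] N :=
  TensorProduct.lift (LinearMap.mk₂ k (fun a n => a • n)
    (fun a a' n => add_smul _ _ _) (fun s a n => smul_assoc _ _ _)
    (fun a n n' => smul_add _ _ _) (fun s a n => smul_comm _ _ _))

section Aux

variable (N : Type u) [AddCommGroup N] [Module k N] [Module A N]
variable (M : Type u) [AddCommGroup M] [Module k M] [Module A M] [Module Aᵐᵒᵖ M]
  [IsScalarTower k A M] [IsScalarTower k Aᵐᵒᵖ M] [SMulCommClass A Aᵐᵒᵖ M]

noncomputable def rmul : M ⊗[k] A →ₗ[k] M :=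
  TensorProduct.lift (LinearMap.mk₂ k (fun m a => MulOpposite.op a • m)
    (fun m m' a => smul_add _ _ _)
    (fun c m a => smul_comm _ _ _)
    (fun m a a' => by rw [MulOpposite.op_add, add_smul])
    (fun c m a => by rw [MulOpposite.op_smul, smul_assoc]))

noncomputable def Fmap : M ⊗[k] (A ⊗[k] N) →ₗ[k] M ⊗[k] N :=
  (TensorProduct.map (rmul k A M) LinearMap.id) ∘ₗ
    (TensorProduct.assoc k M A N).symm.toLinearMap

@[simp] lemma Fmap_tmul (m : M) (a : A) (n : N) :
    Fmap k A N M (m ⊗ₜ[k] (a ⊗ₜ[k] n)) = (MulOpposite.op a • m) ⊗ₜ[k] n := by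
  simp [Fmap, rmul]

lemma Fmap_smul_left (a : A) (m : M) (t : A ⊗[k] N) :
    Fmap k A N M ((a • m) ⊗ₜ[k] t) = a • Fmap k A N M (m ⊗ₜ[k] t) := by
  induction t using TensorProduct.induction_on with
  | zero => simp
  | tmul b n => simp [smul_tmul', smul_comm]
  | add x y hx hy => simp [tmul_add, hx, hy]

lemma Fmap_smul_right (a : A) (m : M) (t : A ⊗[k] N) :
    Fmap k A N M (m ⊗ₜ[k] (a • t)) = Fmap k A N M ((MulOpposite.op a • m) ⊗ₜ[k] t) := by
  induction t using TensorProduct.induction_on with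
  | zero => simp
  | tmul b n =>
      simp only [smul_tmul', smul_eq_mul, Fmap_tmul]
      rw [← mul_smul]
      rfl
  | add x y hx hy => simp only [smul_add, tmul_add, map_add, hx, hy]

lemma actionMap_tmul [IsScalarTower k A N] (a : A) (n : N) :
    actionMap k A N (a ⊗ₜ[k] n) = a • n := rfl

lemma actionMap_smul [IsScalarTower k A N] (a : A) (t : A ⊗[k] N) :
    actionMap k A N (a • t) = a • actionMap k A N t := by
  induction t using TensorProduct.induction_on with
  | zero => simp
  | tmul b n => simp [smul_tmul', smul_eq_mul, actionMap_tmul, mul_smul]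
  | add x y hx hy => simp [smul_add, hx, hy]

lemma mkQ_smul_right (a : A) (m : M) (n : N) :
    (relSub k A M N).mkQ ((MulOpposite.op a • m) ⊗ₜ[k] n) =
      (relSub k A M N).mkQ (m ⊗ₜ[k] (a • n)) := by
  rw [Submodule.mkQ_apply, Submodule.mkQ_apply, Submodule.Quotient.eq]
  exact Submodule.subset_span ⟨a, m, n, rfl⟩

lemma mkQ_Fmap [IsScalarTower k A N] (m : M) (t : A ⊗[k] N) :
    (relSub k A M N).mkQ (Fmap k A N M (m ⊗ₜ[k] t)) =
      (relSub k A M N).mkQ (m ⊗ₜ[k] actionMap k A N t) := by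
  induction t using TensorProduct.induction_on with
  | zero => simp
  | tmul a n => rw [Fmap_tmul, mkQ_smul_right, actionMap_tmul]
  | add x y hx hy => simp only [map_add, tmul_add, hx, hy]

variable (M' : Type u) [AddCommGroup M'] [Module k M'] [Module A M'] [Module Aᵐᵒᵖ M']
  [IsScalarTower k A M'] [IsScalarTower k Aᵐᵒᵖ M'] [SMulCommClass A Aᵐᵒᵖ M']

lemma map_Fmap (f : M →ₗ[A] M')
    (hf : ∀ (a : A) (m : M), f (MulOpposite.op a • m) = MulOpposite.op a • f m)
    (m : M) (t : A ⊗[k] N) :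
    TensorProduct.map (f.restrictScalars k) LinearMap.id (Fmap k A N M (m ⊗ₜ[k] t)) =
      Fmap k A N M' ((f m) ⊗ₜ[k] t) := by
  induction t using TensorProduct.induction_on with
  | zero => simp
  | tmul a n =>
      simp only [Fmap_tmul, map_tmul, LinearMap.coe_restrictScalars, LinearMap.id_coe, id_eq]
      rw [hf]
  | add x y hx hy => simp only [tmul_add, map_add, hx, hy]

variable [IsScalarTower k A N]

noncomputable def psi (s : N →ₗ[A] A ⊗[k] N) : M ⊗[k] N →ₗ[A] M ⊗[k] N where
  toFun := fun x => Fmap k A N M (TensorProduct.map LinearMap.id (s.restrictScalars k) x)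
  map_add' x y := by simp
  map_smul' a x := by
    dsimp only [RingHom.id_apply]
    induction x using TensorProduct.induction_on with
    | zero => simp
    | tmul m n =>
        simp only [smul_tmul', map_tmul, LinearMap.id_coe, id_eq,
          LinearMap.coe_restrictScalars, Fmap_smul_left]
    | add x y hx hy => simp only [smul_add, map_add, hx, hy]

lemma psi_tmul (s : N →ₗ[A] A ⊗[k] N) (m : M) (n : N) :
    psi k A N M s (m ⊗ₜ[k] n) = Fmap k A N M (m ⊗ₜ[k] s n) := rfl

lemma relSub_le_ker_psi (s : N →ₗ[A] A ⊗[k] N) :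
    relSub k A M N ≤ LinearMap.ker (psi k A N M s) := by
  rw [relSub, Submodule.span_le]
  rintro x ⟨a, m, n, rfl⟩
  simp only [SetLike.mem_coe, LinearMap.mem_ker, map_sub, psi_tmul]
  rw [map_smul, Fmap_smul_right, sub_self]

end Aux

/-- let `A` be a `k`-algebra and `N` an `(A,A)`-bimodule, and let
`Σ = (−) ⊗_A N` be the induced endofunctor on `(A,A)`-bimodules.  Then `Σ` admits a
connection — equivalently, there is a family of left `A`-linear splittings
`∇_M : M ⊗_A N ⟶ M ⊗_k N` of the quotient maps `M ⊗_k N ⟶ M ⊗_A N`, natural in the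
bimodule `M` — if and only if `N` is `k`-relative projective as a left `A`-module,
i.e. the action map `A ⊗_k N ⟶ N` admits a left `A`-linear splitting. -/
theorem connection_iff_kRelativeProjective
    (N : Type u) [AddCommGroup N] [Module k N] [Module A N] [Module Aᵐᵒᵖ N]
    [IsScalarTower k A N] [IsScalarTower k Aᵐᵒᵖ N] [SMulCommClass A Aᵐᵒᵖ N] :
    (∃ nabla : ∀ (M : Type u) [AddCommGroup M] [Module k M] [Module A M]
        [Module Aᵐᵒᵖ M] [IsScalarTower k A M] [IsScalarTower k Aᵐᵒᵖ M]
        [SMulCommClass A Aᵐᵒᵖ M],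
        ((M ⊗[k] N) ⧸ relSub k A M N) →ₗ[A] M ⊗[k] N,
      -- each `∇_M` splits the quotient map `M ⊗_k N ⟶ M ⊗_A N`:
      (∀ (M : Type u) [AddCommGroup M] [Module k M] [Module A M] [Module Aᵐᵒᵖ M]
          [IsScalarTower k A M] [IsScalarTower k Aᵐᵒᵖ M] [SMulCommClass A Aᵐᵒᵖ M],
        ∀ x : (M ⊗[k] N) ⧸ relSub k A M N, (relSub k A M N).mkQ (nabla M x) = x) ∧
      -- naturality in bimodule maps `f : M ⟶ M'`:
      (∀ (M M' : Type u) [AddCommGroup M] [Module k M] [Module A M] [Module Aᵐᵒᵖ M]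
          [IsScalarTower k A M] [IsScalarTower k Aᵐᵒᵖ M] [SMulCommClass A Aᵐᵒᵖ M]
          [AddCommGroup M'] [Module k M'] [Module A M'] [Module Aᵐᵒᵖ M']
          [IsScalarTower k A M'] [IsScalarTower k Aᵐᵒᵖ M'] [SMulCommClass A Aᵐᵒᵖ M']
          (f : M →ₗ[A] M')
          (hf : ∀ (a : A) (m : M), f (MulOpposite.op a • m) = MulOpposite.op a • f m),
        ∀ x : M ⊗[k] N,
          nabla M' ((relSub k A M' N).mkQ
              (TensorProduct.map (f.restrictScalars k) LinearMap.id x)) =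
            TensorProduct.map (f.restrictScalars k) LinearMap.id
              (nabla M ((relSub k A M N).mkQ x)))) ↔
    (∃ s : N →ₗ[A] A ⊗[k] N, ∀ n : N, actionMap k A N (s n) = n) := by
  constructor
  · rintro ⟨nabla, hsplit, -⟩
    have hker : ∀ x ∈ relSub k A A N, actionMap k A N x = 0 := by
      intro x hx
      induction hx using Submodule.span_induction with
      | mem x hx =>
          obtain ⟨a, m, n, rfl⟩ := hx
          simp only [map_sub, actionMap_tmul]
          rw [op_smul_eq_mul, mul_smul, sub_self]
      | zero => simp
      | add x y _ _ hx hy => rw [map_add, hx, hy, add_zero]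
      | smul a x _ hx => rw [actionMap_smul, hx, smul_zero]
    have h1 : ∀ (a : A) (n : N), (relSub k A A N).mkQ ((1:A) ⊗ₜ[k] (a • n)) =
        a • (relSub k A A N).mkQ ((1:A) ⊗ₜ[k] n) := by
      intro a n
      rw [← map_smul, smul_tmul', smul_eq_mul, mul_one]
      have := mkQ_smul_right k A N A a (1:A) n
      rw [op_smul_eq_mul, one_mul] at this
      exact this.symm
    refine ⟨{ toFun := fun n => nabla A ((relSub k A A N).mkQ ((1:A) ⊗ₜ[k] n)),
              map_add' := ?_, map_smul' := ?_ }, ?_⟩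
    · intro n n'
      rw [tmul_add, map_add, map_add]
    · intro a n
      dsimp only [RingHom.id_apply]
      rw [h1, map_smul]
    · intro n
      dsimp only [LinearMap.coe_mk, AddHom.coe_mk]
      have hm := hsplit A ((relSub k A A N).mkQ ((1:A) ⊗ₜ[k] n))
      have hd : nabla A ((relSub k A A N).mkQ ((1:A) ⊗ₜ[k] n)) - (1:A) ⊗ₜ[k] n ∈
          relSub k A A N := by
        rw [← Submodule.Quotient.eq]
        simpa only [Submodule.mkQ_apply] using hm
      have h0 := hker _ hd
      rw [map_sub, sub_eq_zero] at h0
      rw [h0, actionMap_tmul, one_smul]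
  · rintro ⟨s, hs⟩
    refine ⟨fun M _ _ _ _ _ _ _ =>
      (relSub k A M N).liftQ (psi k A N M s) (relSub_le_ker_psi k A N M s), ?_, ?_⟩
    · intro M _ _ _ _ _ _ _ x
      obtain ⟨y, rfl⟩ := Submodule.mkQ_surjective _ x
      dsimp only
      simp only [Submodule.mkQ_apply, Submodule.liftQ_apply]
      induction y using TensorProduct.induction_on with
      | zero => simp
      | tmul m n =>
          rw [psi_tmul, ← Submodule.mkQ_apply, ← Submodule.mkQ_apply, mkQ_Fmap, hs]
      | add x y hx hy =>
          simp only [map_add, Submodule.Quotient.mk_add, hx, hy]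
    · intro M M' _ _ _ _ _ _ _ _ _ _ _ _ _ _ f hf x
      dsimp only
      simp only [Submodule.mkQ_apply, Submodule.liftQ_apply]
      induction x using TensorProduct.induction_on with
      | zero => simp
      | tmul m n =>
          rw [map_tmul, psi_tmul, psi_tmul]
          exact (map_Fmap k A N M M' f hf m (s n)).symm
      | add x y hx hy => rw [map_add, map_add, map_add, map_add, hx, hy]


end BohmStefan
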